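/- Let E be a real inner product space, let j ≥ 1 and k ≥ 0 be integers, let ξ : E^j → ℝ be a symmetric j-multilinear map (invariant under all permutations of its arguments), and let F : E →ₗ[ℝ] E be a linear map satisfying ⟪F w, w⟫ = 0 for all w ∈ E. Define the (j+2k)-multilinear map T by T(w₁,…,w_{j+2k}) = ξ(w₁,…,w_j) · Π_{i=1}^{k} ⟪w_{j+2i−1}, w_{j+2i}⟫, and its symmetrization Sym T = (1/(j+2k)!) Σ_{σ ∈ Perm(j+2k)} T ∘ σ. Then for every v ∈ E: (Sym T)(F v, v, …, v) = (j/(j+2k)) · ξ(F v, v, …, v) · ⟪v, v⟫ᵏ. -/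

import Mathlib

open scoped BigOperators

lemma perm_fiber_card_eq {n : ℕ} (z b b' : Fin n) :
    (Finset.univ.filter fun σ : Equiv.Perm (Fin n) => σ z = b).card =
    (Finset.univ.filter fun σ : Equiv.Perm (Fin n) => σ z = b').card := by
  apply Finset.card_bij' (fun σ _ => Equiv.swap b b' * σ) (fun σ _ => Equiv.swap b b' * σ)
  · intro σ hσ
    simp only [Finset.mem_filter, Finset.mem_univ, true_and] at hσ ⊢
    simp [Equiv.Perm.mul_apply, hσ]
  · intro σ hσ
    simp only [Finset.mem_filter, Finset.mem_univ, true_and] at hσ ⊢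
    simp [Equiv.Perm.mul_apply, hσ, Equiv.swap_apply_right]
  · intro σ _; simp [← mul_assoc]
  · intro σ _; simp [← mul_assoc]

lemma perm_fiber_card_mul {n : ℕ} (z b : Fin n) :
    (Finset.univ.filter fun σ : Equiv.Perm (Fin n) => σ z = b).card * n =
    Nat.factorial n := by
  have h : (Finset.univ : Finset (Equiv.Perm (Fin n))).card =
      ∑ b' : Fin n, (Finset.univ.filter fun σ : Equiv.Perm (Fin n) => σ z = b').card :=
    Finset.card_eq_sum_card_fiberwise (fun σ _ => Finset.mem_univ _)
  have h2 : ∀ b' : Fin n, (Finset.univ.filter fun σ : Equiv.Perm (Fin n) => σ z = b').card =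
      (Finset.univ.filter fun σ : Equiv.Perm (Fin n) => σ z = b).card :=
    fun b' => perm_fiber_card_eq z b' b
  rw [Finset.sum_congr rfl (fun b' _ => h2 b'), Finset.sum_const, smul_eq_mul] at h
  simp only [Finset.card_univ, Fintype.card_perm, Fintype.card_fin] at h
  rw [mul_comm] at h
  omega


/-- Let `ξ` be a symmetric `j`-multilinear form (`j ≥ 1`), `F` linear with
`⟪F w, w⟫ = 0`, and let `T(w₁,…,w_{j+2k}) = ξ(w₁,…,w_j) · Π_{i=1}^{k} ⟪w_{j+2i-1}, w_{j+2i}⟫`.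
Then the symmetrization of `T` evaluated at `(F v, v, …, v)` equals
`(j/(j+2k)) · ξ(F v, v, …, v) · ⟪v,v⟫ᵏ`. -/
theorem sym_tensor_metric_commutation
    (E : Type*) [NormedAddCommGroup E] [InnerProductSpace ℝ E]
    (j k : ℕ) (hj : 1 ≤ j)
    (ξ : MultilinearMap ℝ (fun _ : Fin j => E) ℝ)
    (hξsymm : ∀ (σ : Equiv.Perm (Fin j)) (w : Fin j → E), ξ (w ∘ σ) = ξ w)
    (F : E →ₗ[ℝ] E) (hF : ∀ w : E, (inner ℝ (F w) w : ℝ) = 0)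
    (T : (Fin (j + 2 * k) → E) → ℝ)
    (hT : ∀ w : Fin (j + 2 * k) → E,
      T w = ξ (fun i => w (Fin.castAdd (2 * k) i)) *
        ∏ i : Fin k,
          (inner ℝ (w ⟨j + 2 * i.1, by have := i.2; omega⟩)
                 (w ⟨j + 2 * i.1 + 1, by have := i.2; omega⟩) : ℝ)) :
    ∀ v : E,
      (1 / (Nat.factorial (j + 2 * k) : ℝ)) *
          ∑ σ : Equiv.Perm (Fin (j + 2 * k)),
            T ((fun i : Fin (j + 2 * k) => if i.1 = 0 then F v else v) ∘ σ)
        = ((j : ℝ) / ((j : ℝ) + 2 * k)) *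
            ξ (fun i : Fin j => if i.1 = 0 then F v else v) * (inner ℝ v v : ℝ) ^ k := by
  intro v
  classical
  have hn0 : 0 < j + 2 * k := by omega
  set z : Fin (j + 2 * k) := ⟨0, hn0⟩ with hz
  set w : Fin (j + 2 * k) → E := fun i : Fin (j + 2 * k) => if i.1 = 0 then F v else v with hw
  set C : ℝ := ξ (fun i : Fin j => if i.1 = 0 then F v else v) * (inner ℝ v v : ℝ) ^ k with hC
  -- Step 1: pointwise evaluation of T (w ∘ σ)
  have key : ∀ σ : Equiv.Perm (Fin (j + 2 * k)),
      T (w ∘ σ) = if (σ⁻¹ z).1 < j then C else 0 := by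
    intro σ
    set p : Fin (j + 2 * k) := σ⁻¹ z with hp
    have hws : ∀ i : Fin (j + 2 * k), (w ∘ σ) i = if i = p then F v else v := by
      intro i
      by_cases h : i = p
      · subst h
        have hs : σ p = z := by rw [hp]; simp
        rw [Function.comp_apply, if_pos rfl, hw]
        simp [hs, hz]
      · have hne : σ i ≠ z := fun hc => h (by rw [hp, ← hc]; simp)
        have : (σ i).1 ≠ 0 := fun hc => hne (Fin.ext hc)
        simp [hw, Function.comp, this, h]
    rw [hT]
    by_cases hpj : p.1 < j
    · rw [if_pos hpj]
      set q : Fin j := ⟨p.1, hpj⟩ with hq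
      have hξeq : (ξ (fun i : Fin j => (w ∘ σ) (Fin.castAdd (2 * k) i)) : ℝ)
          = ξ (fun i : Fin j => if i.1 = 0 then F v else v) := by
        have harg : (fun i : Fin j => (w ∘ σ) (Fin.castAdd (2 * k) i))
            = (fun i : Fin j => if i.1 = 0 then F v else v) ∘ Equiv.swap ⟨0, hj⟩ q := by
          funext i
          rw [hws]
          by_cases h : i = q
          · have h1 : Fin.castAdd (2 * k) i = p := by
              apply Fin.ext; simp [h, hq]
            simp [h1, h, Function.comp, Equiv.swap_apply_right, hq]
          · have h1 : Fin.castAdd (2 * k) i ≠ p := by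
              intro hc
              apply h
              apply Fin.ext
              have := congrArg Fin.val hc
              simpa [hq] using this
            have h2 : (Equiv.swap (⟨0, hj⟩ : Fin j) q i).1 ≠ 0 := by
              intro hc
              have h3 : Equiv.swap (⟨0, hj⟩ : Fin j) q i = ⟨0, hj⟩ := Fin.ext hc
              have h4 : i = q := by
                have := congrArg (Equiv.swap (⟨0, hj⟩ : Fin j) q) h3
                simpa [Equiv.swap_apply_left] using this
              exact h h4
            simp [h1, Function.comp, h2]
        rw [harg, hξsymm]
      rw [hξeq]
      have hpow : (inner ℝ v v : ℝ) ^ k = ∏ _i : Fin k, (inner ℝ v v : ℝ) := by simp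
      have hprod : (∏ i : Fin k,
          (inner ℝ ((w ∘ σ) ⟨j + 2 * i.1, by have := i.2; omega⟩)
                 ((w ∘ σ) ⟨j + 2 * i.1 + 1, by have := i.2; omega⟩) : ℝ))
          = (inner ℝ v v : ℝ) ^ k := by
        rw [hpow]
        apply Finset.prod_congr rfl
        intro i _
        have h1 : (⟨j + 2 * i.1, by have := i.2; omega⟩ : Fin (j + 2 * k)) ≠ p := by
          intro hc; have := congrArg Fin.val hc; simp at this; omega
        have h2 : (⟨j + 2 * i.1 + 1, by have := i.2; omega⟩ : Fin (j + 2 * k)) ≠ p := by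
          intro hc; have := congrArg Fin.val hc; simp at this; omega
        rw [hws, hws, if_neg h1, if_neg h2]
      rw [hprod, hC]
    · rw [if_neg hpj]
      push_neg at hpj
      have hplt : p.1 < j + 2 * k := p.2
      have hmk : (p.1 - j) / 2 < k := by omega
      set m : ℕ := (p.1 - j) / 2 with hm
      have hprod : (∏ i : Fin k,
          (inner ℝ ((w ∘ σ) ⟨j + 2 * i.1, by have := i.2; omega⟩)
                 ((w ∘ σ) ⟨j + 2 * i.1 + 1, by have := i.2; omega⟩) : ℝ)) = 0 := by
        apply Finset.prod_eq_zero (Finset.mem_univ (⟨m, hmk⟩ : Fin k))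
        rcases Nat.even_or_odd (p.1 - j) with he | ho
        · have hpv : p.1 = j + 2 * m := by
            obtain ⟨t, ht⟩ := he; omega
          have h1 : (⟨j + 2 * (⟨m, hmk⟩ : Fin k).1, by omega⟩ : Fin (j + 2 * k)) = p := by
            apply Fin.ext; simp; omega
          have h2 : (⟨j + 2 * (⟨m, hmk⟩ : Fin k).1 + 1, by omega⟩ : Fin (j + 2 * k)) ≠ p := by
            intro hc; have := congrArg Fin.val hc; simp at this; omega
          rw [hws, hws, if_pos h1, if_neg h2]
          exact hF v
        · have hpv : p.1 = j + 2 * m + 1 := by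
            obtain ⟨t, ht⟩ := ho; omega
          have h1 : (⟨j + 2 * (⟨m, hmk⟩ : Fin k).1, by omega⟩ : Fin (j + 2 * k)) ≠ p := by
            intro hc; have := congrArg Fin.val hc; simp at this; omega
          have h2 : (⟨j + 2 * (⟨m, hmk⟩ : Fin k).1 + 1, by omega⟩ : Fin (j + 2 * k)) = p := by
            apply Fin.ext; simp; omega
          rw [hws, hws, if_neg h1, if_pos h2, real_inner_comm]
          exact hF v
      rw [hprod, mul_zero]
  -- Step 2: sum over permutations
  have hsum : (∑ σ : Equiv.Perm (Fin (j + 2 * k)), T (w ∘ σ))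
      = ((Finset.univ.filter fun σ : Equiv.Perm (Fin (j + 2 * k)) => σ z = z).card : ℝ)
          * (j * C) := by
    calc (∑ σ : Equiv.Perm (Fin (j + 2 * k)), T (w ∘ σ))
        = ∑ σ : Equiv.Perm (Fin (j + 2 * k)), (if (σ⁻¹ z).1 < j then C else 0) :=
          Finset.sum_congr rfl (fun σ _ => key σ)
      _ = ∑ σ : Equiv.Perm (Fin (j + 2 * k)), (if (σ z).1 < j then C else 0) := by
          rw [← Equiv.sum_comp (Equiv.inv (Equiv.Perm (Fin (j + 2 * k))))
            (fun σ : Equiv.Perm (Fin (j + 2 * k)) => if (σ z).1 < j then C else 0)]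
          rfl
      _ = ∑ b : Fin (j + 2 * k),
            ∑ σ ∈ Finset.univ.filter fun σ : Equiv.Perm (Fin (j + 2 * k)) => σ z = b,
              (if (σ z).1 < j then C else 0) :=
          (Finset.sum_fiberwise_of_maps_to (fun σ _ => Finset.mem_univ _) _).symm
      _ = ∑ b : Fin (j + 2 * k),
            ∑ _σ ∈ Finset.univ.filter fun σ : Equiv.Perm (Fin (j + 2 * k)) => σ z = b,
              (if b.1 < j then C else 0) := by
          refine Finset.sum_congr rfl fun b _ => Finset.sum_congr rfl fun σ hσ => ?_
          simp only [Finset.mem_filter] at hσ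
          rw [hσ.2]
      _ = ∑ b : Fin (j + 2 * k),
            ((Finset.univ.filter fun σ : Equiv.Perm (Fin (j + 2 * k)) => σ z = b).card : ℝ)
              * (if b.1 < j then C else 0) := by
          refine Finset.sum_congr rfl fun b _ => ?_
          rw [Finset.sum_const, nsmul_eq_mul]
      _ = ∑ b : Fin (j + 2 * k),
            ((Finset.univ.filter fun σ : Equiv.Perm (Fin (j + 2 * k)) => σ z = z).card : ℝ)
              * (if b.1 < j then C else 0) := by
          refine Finset.sum_congr rfl fun b _ => ?_
          rw [perm_fiber_card_eq z b z]
      _ = ((Finset.univ.filter fun σ : Equiv.Perm (Fin (j + 2 * k)) => σ z = z).card : ℝ)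
              * ∑ b : Fin (j + 2 * k), (if b.1 < j then C else 0) := by
          rw [Finset.mul_sum]
      _ = ((Finset.univ.filter fun σ : Equiv.Perm (Fin (j + 2 * k)) => σ z = z).card : ℝ)
              * (j * C) := by
          congr 1
          rw [Fin.sum_univ_eq_sum_range (fun i => if i < j then C else 0)]
          rw [← Finset.sum_filter]
          have hr : (Finset.range (j + 2 * k)).filter (· < j) = Finset.range j := by
            ext x; simp only [Finset.mem_filter, Finset.mem_range]; omega
          rw [hr, Finset.sum_const, Finset.card_range, nsmul_eq_mul]
  rw [hsum]
  set c : ℕ := (Finset.univ.filter fun σ : Equiv.Perm (Fin (j + 2 * k)) => σ z = z).card with hc'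
  have hcn : (c : ℝ) * ((j + 2 * k : ℕ) : ℝ) = Nat.factorial (j + 2 * k) := by
    exact_mod_cast congrArg Nat.cast (perm_fiber_card_mul z z)
  have hfac : (0 : ℝ) < Nat.factorial (j + 2 * k) := by positivity
  have hnn : ((j + 2 * k : ℕ) : ℝ) = (j : ℝ) + 2 * k := by push_cast; ring
  have hne : ((j + 2 * k : ℕ) : ℝ) ≠ 0 := by positivity
  have hfacne : ((Nat.factorial (j + 2 * k) : ℕ) : ℝ) ≠ 0 := ne_of_gt hfac
  have hcr : (c : ℝ) = (Nat.factorial (j + 2 * k) : ℝ) / ((j + 2 * k : ℕ) : ℝ) :=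
    (eq_div_iff hne).2 hcn
  rw [hC, hcr, hnn]
  field_simp
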